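/- Let G be a directed cactus graph with n vertices and r edges (a strongly connected digraph in which every edge lies in exactly one directed cycle, equivalently there is a unique directed path between any two vertices), and let I_G ∈ Z^{n×r} be its incidence matrix (column of edge e = u→v has −1 in row u, +1 in row v, zeros elsewhere). Then there exists an invertible matrix K ∈ Q^{n×n} such that each of the first n−1 rows of K · I_G has exactly two nonzero entries, and these two entries have opposite signs. -/

import Mathlib

/-- A directed walk from `a` to `b` along the edge list `es` in the digraph with
source map `src` and target map `tgt`. -/
def IsWalk {n r : ℕ} (src tgt : Fin r → Fin n) : Fin n → Fin n → List (Fin r) → Prop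
  | a, b, [] => a = b
  | a, b, e :: es => src e = a ∧ IsWalk src tgt (tgt e) b es

/-- A directed cycle: a nonempty closed walk visiting pairwise distinct vertices. -/
def IsCycle {n r : ℕ} (src tgt : Fin r → Fin n) (es : List (Fin r)) : Prop :=
  es ≠ [] ∧ (∃ a, IsWalk src tgt a a es) ∧ (es.map src).Nodup

/-- The incidence matrix of a digraph: column of edge e has −1 at its source and
+1 at its target. -/
def incidence {n r : ℕ} (src tgt : Fin r → Fin n) : Matrix (Fin n) (Fin r) ℚ :=
  Matrix.of fun v e => (if tgt e = v then 1 else 0) - (if src e = v then 1 else 0)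

namespace Cact

variable {n r : ℕ} {src tgt : Fin r → Fin n}

@[simp] lemma isWalk_nil {a b : Fin n} : IsWalk src tgt a b [] ↔ a = b := Iff.rfl

@[simp] lemma isWalk_cons {a b : Fin n} {e : Fin r} {es : List (Fin r)} :
    IsWalk src tgt a b (e :: es) ↔ src e = a ∧ IsWalk src tgt (tgt e) b es := Iff.rfl

lemma isWalk_append {a b c : Fin n} {es1 es2 : List (Fin r)}
    (h1 : IsWalk src tgt a b es1) (h2 : IsWalk src tgt b c es2) :
    IsWalk src tgt a c (es1 ++ es2) := by
  induction es1 generalizing a with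
  | nil => cases h1; simpa using h2
  | cons e t ih => exact ⟨h1.1, ih h1.2⟩

lemma isWalk_append_iff {a c : Fin n} {es1 es2 : List (Fin r)} :
    IsWalk src tgt a c (es1 ++ es2) ↔ ∃ b, IsWalk src tgt a b es1 ∧ IsWalk src tgt b c es2 := by
  constructor
  · intro h
    induction es1 generalizing a with
    | nil => exact ⟨a, rfl, h⟩
    | cons e t ih =>
      obtain ⟨b, hb1, hb2⟩ := ih h.2
      exact ⟨b, ⟨h.1, hb1⟩, hb2⟩
  · rintro ⟨b, h1, h2⟩; exact isWalk_append h1 h2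

/-- the end of a walk is a visited vertex -/

lemma visits_eq {a b : Fin n} {es : List (Fin r)} (h : IsWalk src tgt a b es) :
    a :: es.map tgt = es.map src ++ [b] := by
  induction es generalizing a with
  | nil => simp [isWalk_nil.1 h]
  | cons e t ih =>
    have := ih h.2
    simp only [List.map_cons, List.cons_append, h.1]
    rw [← this]

/-- the targets of a closed walk are nodup when the sources are -/
lemma nodup_map_tgt {a : Fin n} {es : List (Fin r)} (h : IsWalk src tgt a a es)
    (hnd : (es.map src).Nodup) : (es.map tgt).Nodup := by
  cases es with
  | nil => simp
  | cons e t =>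
    have hv := visits_eq h
    have hsrc : src e = a := h.1
    simp only [List.map_cons, hsrc] at hv hnd
    have h2 : tgt e :: t.map tgt = t.map src ++ [a] := by
      simpa using congrArg List.tail hv
    rw [List.map_cons, h2]
    simp only [List.nodup_cons] at hnd
    simp only [List.nodup_append, List.nodup_cons]
    refine ⟨hnd.2, by simp, ?_⟩
    intro x hx
    simp only [List.mem_singleton]
    rintro _ rfl rfl
    exact hnd.1 hx

/-- rotation: splitting a closed walk at an edge -/
lemma rotate_closed {a : Fin n} {es l1 l2 : List (Fin r)} {e : Fin r}
    (h : IsWalk src tgt a a es) (hsplit : es = l1 ++ e :: l2) :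
    IsWalk src tgt (tgt e) (src e) (l2 ++ l1) := by
  subst hsplit
  obtain ⟨b, h1, h2⟩ := isWalk_append_iff.1 h
  exact isWalk_append h2.2 (h2.1 ▸ h1)

lemma exists_tgt_last {a b : Fin n} {es : List (Fin r)} (h : IsWalk src tgt a b es)
    (hne : es ≠ []) : ∃ f ∈ es, tgt f = b := by
  induction es generalizing a with
  | nil => simp at hne
  | cons e t ih =>
    cases t with
    | nil => exact ⟨e, by simp, isWalk_nil.1 h.2⟩
    | cons g u =>
      obtain ⟨f, hf, hf2⟩ := ih h.2 (by simp)
      exact ⟨f, by simp [List.mem_cons.1 hf], hf2⟩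

/-- In a closed walk, every vertex that is a target is also the source of an edge. -/
lemma exists_src_eq_tgt {a : Fin n} {es : List (Fin r)} (h : IsWalk src tgt a a es)
    {e : Fin r} (he : e ∈ es) : ∃ f ∈ es, src f = tgt e := by
  obtain ⟨l1, l2, rfl⟩ := List.append_of_mem he
  have hrot := rotate_closed h rfl
  cases hl : l2 ++ l1 with
  | nil =>
    refine ⟨e, he, ?_⟩
    rw [hl] at hrot
    exact (isWalk_nil.1 hrot).symm
  | cons g u =>
    rw [hl] at hrot
    have hg : g ∈ l2 ++ l1 := by rw [hl]; simp
    have : g ∈ l1 ++ e :: l2 := by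
      rcases List.mem_append.1 hg with h' | h' <;> simp [h']
    exact ⟨g, this, hrot.1⟩

/-- In a closed walk, every vertex that is a source is also the target of an edge. -/
lemma exists_tgt_eq_src {a : Fin n} {es : List (Fin r)} (h : IsWalk src tgt a a es)
    {e : Fin r} (he : e ∈ es) : ∃ f ∈ es, tgt f = src e := by
  obtain ⟨l1, l2, rfl⟩ := List.append_of_mem he
  have hrot := rotate_closed h rfl
  rcases eq_or_ne (l2 ++ l1) [] with hl | hl
  · refine ⟨e, he, ?_⟩
    rw [hl] at hrot
    exact isWalk_nil.1 hrot
  · obtain ⟨f, hf, hf2⟩ := exists_tgt_last hrot hl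
    have : f ∈ l1 ++ e :: l2 := by
      rcases List.mem_append.1 hf with h' | h' <;> simp [h']
    exact ⟨f, this, hf2⟩

/-- find a duplicate under a map -/
lemma exists_dup_decomp {α β : Type*} {f : α → β} :
    ∀ {l : List α}, ¬(l.map f).Nodup →
      ∃ l1 x l2 y l3, l = l1 ++ x :: l2 ++ y :: l3 ∧ f x = f y := by
  intro l
  induction l with
  | nil => simp
  | cons a t ih =>
    intro hnd
    simp only [List.map_cons, List.nodup_cons] at hnd
    push_neg at hnd
    by_cases hmem : f a ∈ t.map f
    · obtain ⟨y, hy, hfy⟩ := List.mem_map.1 hmem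
      obtain ⟨t1, t2, rfl⟩ := List.append_of_mem hy
      exact ⟨[], a, t1, y, t2, by simp, hfy.symm⟩
    · obtain ⟨l1, x, l2, y, l3, rfl, hxy⟩ := ih (hnd hmem)
      exact ⟨a :: l1, x, l2, y, l3, by simp, hxy⟩

/-- Key lemma: every edge of a closed walk lies on a cycle contained in the walk. -/
lemma cycle_of_closed_aux :
    ∀ N (es : List (Fin r)), es.length ≤ N → ∀ a, IsWalk src tgt a a es → ∀ e ∈ es,
      ∃ cs, IsCycle src tgt cs ∧ e ∈ cs ∧ ∀ x ∈ cs, x ∈ es := by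
  intro N
  induction N with
  | zero =>
    intro es hlen a _ e he
    rw [Nat.le_zero, List.length_eq_zero_iff] at hlen
    subst hlen; simp at he
  | succ N ih =>
    intro es hlen a hw e he
    by_cases hnd : (es.map src).Nodup
    · exact ⟨es, ⟨List.ne_nil_of_mem he, ⟨a, hw⟩, hnd⟩, he, fun x hx => hx⟩
    · obtain ⟨l1, x, l2, y, l3, rfl, hxy⟩ := exists_dup_decomp hnd
      obtain ⟨c2, hwA, hwB⟩ := isWalk_append_iff.1 hw
      obtain ⟨c1, hw1, hw2⟩ := isWalk_append_iff.1 hwA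
      have hsx : src x = c1 := hw2.1
      have hsy : src y = c2 := hwB.1
      have hc12 : c2 = c1 := by rw [← hsy, ← hxy, hsx]
      -- inner closed walk x :: l2 from c1 to c1
      have hinner : IsWalk src tgt c1 c1 (x :: l2) := ⟨hsx, hc12 ▸ hw2.2⟩
      -- outer closed walk l1 ++ y :: l3 from a to a
      have houter : IsWalk src tgt a a (l1 ++ y :: l3) :=
        isWalk_append hw1 ⟨hc12 ▸ hsy, hwB.2⟩
      have hlen' : (l1 ++ x :: l2 ++ y :: l3).length = l1.length + l2.length + l3.length + 2 := by
        simp; omega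
      by_cases hmem : e ∈ x :: l2
      · obtain ⟨cs, hc, hec, hsub⟩ := ih (x :: l2) (by simp at hlen hlen' ⊢; omega) c1 hinner e hmem
        refine ⟨cs, hc, hec, fun z hz => ?_⟩
        have := hsub z hz
        simp only [List.mem_cons, List.mem_append] at this ⊢
        tauto
      · have hmem' : e ∈ l1 ++ y :: l3 := by
          simp only [List.mem_append, List.mem_cons] at he hmem ⊢
          push_neg at hmem
          tauto
        obtain ⟨cs, hc, hec, hsub⟩ := ih (l1 ++ y :: l3) (by simp at hlen hlen' ⊢; omega) a houter e hmem'
        refine ⟨cs, hc, hec, fun z hz => ?_⟩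
        have := hsub z hz
        simp only [List.mem_cons, List.mem_append] at this ⊢
        tauto

lemma cycle_of_closed {a : Fin n} {es : List (Fin r)} (h : IsWalk src tgt a a es)
    {e : Fin r} (he : e ∈ es) :
    ∃ cs, IsCycle src tgt cs ∧ e ∈ cs ∧ ∀ x ∈ cs, x ∈ es :=
  cycle_of_closed_aux es.length es le_rfl a h e he

/-- the end of a walk is a visited vertex -/
lemma end_mem_visits {a b : Fin n} {es : List (Fin r)} (h : IsWalk src tgt a b es) :
    b ∈ a :: es.map tgt := by
  induction es generalizing a with
  | nil => simp [h.symm]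
  | cons e t ih =>
    have := ih h.2
    simp only [List.map_cons, List.mem_cons] at this ⊢
    tauto

lemma src_mem_visits {a b : Fin n} {es : List (Fin r)} (h : IsWalk src tgt a b es)
    {e : Fin r} (he : e ∈ es) : src e ∈ a :: es.map tgt := by
  induction es generalizing a with
  | nil => simp at he
  | cons f t ih =>
    rcases List.mem_cons.1 he with rfl | he'
    · simp [h.1]
    · have := ih h.2 he'
      simp only [List.map_cons, List.mem_cons] at this ⊢
      tauto

lemma tgt_mem_visits {a b : Fin n} {es : List (Fin r)} (_ : IsWalk src tgt a b es)
    {e : Fin r} (he : e ∈ es) : tgt e ∈ a :: es.map tgt := by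
  simp only [List.mem_cons, List.mem_map]
  exact Or.inr ⟨e, he, rfl⟩

/-- split a walk at the first visit of `w`. -/
lemma split_first_visit {a b w : Fin n} {es : List (Fin r)} (h : IsWalk src tgt a b es)
    (hw : w ∈ a :: es.map tgt) :
    a = w ∨ ∃ es1 g es2, es = es1 ++ g :: es2 ∧ IsWalk src tgt a (src g) es1 ∧ tgt g = w ∧
      IsWalk src tgt w b es2 ∧ w ∉ a :: es1.map tgt := by
  induction es generalizing a with
  | nil => simp at hw; exact Or.inl hw.symm
  | cons e t ih =>
    by_cases ha : a = w
    · exact Or.inl ha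
    · right
      rcases List.mem_cons.1 hw with h' | hw'
      · exact absurd h'.symm ha
      by_cases he : tgt e = w
      · exact ⟨[], e, t, rfl, by simp [h.1], he, he ▸ h.2, by simpa using fun h'' => ha h''.symm⟩
      · have hw2 : w ∈ tgt e :: t.map tgt := by
          simp only [List.map_cons, List.mem_cons] at hw'
          rcases hw' with h'' | h''
          · exact absurd h''.symm he
          · simp [h'']
        rcases ih h.2 hw2 with h' | ⟨es1, g, es2, rfl, hw1, hgw, hw2', hnot⟩
        · exact absurd h' he
        · refine ⟨e :: es1, g, es2, rfl, ⟨h.1, hw1⟩, hgw, hw2', ?_⟩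
          simp only [List.map_cons, List.mem_cons] at hnot ⊢
          push_neg at hnot ⊢
          exact ⟨fun h'' => ha h''.symm, hnot⟩

/-- split a walk at the last visit of `w`. -/
lemma split_last_visit {a b w : Fin n} {es : List (Fin r)} (h : IsWalk src tgt a b es)
    (hw : w ∈ a :: es.map tgt) :
    ∃ es1 es2, es = es1 ++ es2 ∧ IsWalk src tgt a w es1 ∧ IsWalk src tgt w b es2 ∧
      w ∉ es2.map tgt := by
  induction es generalizing a with
  | nil =>
    simp only [List.map_nil, List.mem_cons, List.not_mem_nil, or_false] at hw
    exact ⟨[], [], rfl, hw.symm, hw ▸ h, by simp⟩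
  | cons e t ih =>
    by_cases hwt : w ∈ (e :: t).map tgt
    · have hw2 : w ∈ tgt e :: t.map tgt := by simpa using hwt
      obtain ⟨t1, t2, rfl, h1, h2, h3⟩ := ih h.2 hw2
      exact ⟨e :: t1, t2, rfl, ⟨h.1, h1⟩, h2, h3⟩
    · have haw : a = w := by
        rcases List.mem_cons.1 hw with h' | h'
        · exact h'.symm
        · exact absurd h' hwt
      exact ⟨[], e :: t, rfl, haw, haw ▸ h, fun hc => hwt (by simpa using hc)⟩

section Dom

variable (src tgt) (ρ : Fin n)

/-- `w` dominates `u` (w.r.t. root `ρ`): every walk from `ρ` to `u` visits `w`. -/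
def Dom (w u : Fin n) : Prop := ∀ es, IsWalk src tgt ρ u es → w ∈ ρ :: es.map tgt

variable {src tgt ρ}

lemma dom_self {w : Fin n} : Dom src tgt ρ w w :=
  fun _ h => end_mem_visits h

lemma not_dom_rho {w : Fin n} (hw : w ≠ ρ) : ¬ Dom src tgt ρ w ρ := by
  intro hd
  have := hd [] rfl
  simp at this
  exact hw this

lemma notDom_of_walk {w u : Fin n} {es : List (Fin r)} (h : IsWalk src tgt ρ u es)
    (hn : w ∉ ρ :: es.map tgt) : ¬ Dom src tgt ρ w u := fun hd => hn (hd es h)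

lemma not_dom_iff {w u : Fin n} : ¬ Dom src tgt ρ w u ↔
    ∃ es, IsWalk src tgt ρ u es ∧ w ∉ ρ :: es.map tgt := by
  unfold Dom
  push_neg
  rfl

lemma notDom_extend {w u v : Fin n} {es : List (Fin r)} (hu : ¬ Dom src tgt ρ w u)
    (h : IsWalk src tgt u v es) (hn : w ∉ es.map tgt) : ¬ Dom src tgt ρ w v := by
  obtain ⟨P, hP, hPn⟩ := not_dom_iff.1 hu
  refine notDom_of_walk (isWalk_append hP h) ?_
  simp only [List.map_append, List.mem_cons, List.mem_append] at hPn ⊢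
  push_neg at hPn ⊢
  exact ⟨hPn.1, hPn.2, fun hc => hn hc⟩

lemma dom_trans {v w u : Fin n} (hvw : Dom src tgt ρ v w) (hwu : Dom src tgt ρ w u) :
    Dom src tgt ρ v u := by
  intro es hes
  have hw := hwu es hes
  rcases split_first_visit hes hw with rfl | ⟨es1, g, es2, rfl, h1, h2, _, _⟩
  · have := hvw [] rfl
    simp at this
    subst this
    simp
  · have hWg : IsWalk src tgt ρ w (es1 ++ [g]) :=
      isWalk_append h1 (by exact ⟨rfl, h2⟩)
    have := hvw _ hWg
    simp only [List.map_append, List.map_cons, List.mem_cons, List.mem_append,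
      List.map_nil, List.mem_singleton] at this ⊢
    rcases this with h' | h' | h'
    · tauto
    · tauto
    · simp at h'
      subst h'
      right; right; left; exact h2.symm ▸ rfl

lemma dom_antisymm (hconn : ∀ a b : Fin n, ∃ es, IsWalk src tgt a b es)
    {w u : Fin n} (hwu : Dom src tgt ρ w u) (huw : Dom src tgt ρ u w) : w = u := by
  classical
  by_contra hne
  -- take a minimal walk from ρ to u
  have hex : ∃ k, ∃ es : List (Fin r), IsWalk src tgt ρ u es ∧ es.length = k := by
    obtain ⟨es, hes⟩ := hconn ρ u
    exact ⟨es.length, es, hes, rfl⟩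
  obtain ⟨es, hes, hlen⟩ := Nat.find_spec hex
  have hmin : ∀ es' : List (Fin r), IsWalk src tgt ρ u es' → Nat.find hex ≤ es'.length :=
    fun es' h' => Nat.find_le ⟨es', h', rfl⟩
  have hw := hwu es hes
  rcases split_first_visit hes hw with hww | ⟨es1, g, es2, rfl, h1, h2, _, _⟩
  · -- ρ = w
    have h0 : IsWalk src tgt ρ w [] := hww
    have h1 := huw [] h0
    simp only [List.map_nil, List.mem_cons, List.not_mem_nil, or_false] at h1
    exact hne (by rw [← hww]; exact h1.symm)
  · have hWg : IsWalk src tgt ρ w (es1 ++ [g]) := isWalk_append h1 ⟨rfl, h2⟩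
    have hu := huw _ hWg
    simp only [List.map_append, List.map_cons, List.map_nil, List.mem_cons,
      List.mem_append, List.mem_singleton] at hu
    have hu' : u ∈ ρ :: es1.map tgt ∨ u = tgt g := by
      simp only [List.mem_cons]; tauto
    rcases hu' with hu' | hu'
    · rcases split_first_visit h1 hu' with hru | ⟨f1, g', f2, hsp, hf1, hg', _, _⟩
      · -- ρ = u : empty walk, contradicting minimality since es ≠ []
        have h0 : IsWalk src tgt ρ u [] := by rw [← hru]; rfl
        have hle := hmin [] h0
        simp only [List.length_nil, Nat.le_zero] at hle
        rw [hle] at hlen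
        simp at hlen
      · have hW' : IsWalk src tgt ρ u (f1 ++ [g']) := isWalk_append hf1 ⟨rfl, hg'⟩
        have hle := hmin _ hW'
        have hlen1 : f1.length + (f2.length + 1) = es1.length := by
          have := congrArg List.length hsp
          simpa using this.symm
        simp only [List.length_append, List.length_cons] at hlen
        simp only [List.length_append, List.length_singleton] at hle
        omega
    · exact hne (h2 ▸ hu'.symm)

end Dom

section Unique

variable {ρ : Fin n}

lemma cyc_nodup {cs : List (Fin r)} (h : IsCycle src tgt cs) : cs.Nodup :=
  h.2.2.of_map

lemma cyc_tgt_inj {cs : List (Fin r)} (h : IsCycle src tgt cs) {e f : Fin r}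
    (he : e ∈ cs) (hf : f ∈ cs) (hef : tgt e = tgt f) : e = f := by
  obtain ⟨hne, ⟨a, hcl⟩, hnd⟩ := h
  exact List.inj_on_of_nodup_map (nodup_map_tgt hcl hnd) he hf hef

lemma cyc_finset_eq
    (hcactus : ∀ e : Fin r, ∃! Cyc : Finset (Fin r),
      ∃ es, IsCycle src tgt es ∧ es.toFinset = Cyc ∧ e ∈ es)
    {cs cs' : List (Fin r)} (h : IsCycle src tgt cs) (h' : IsCycle src tgt cs')
    {e : Fin r} (he : e ∈ cs) (he' : e ∈ cs') : cs.toFinset = cs'.toFinset := by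
  obtain ⟨C, _, hun⟩ := hcactus e
  rw [hun cs.toFinset ⟨cs, h, rfl, he⟩, hun cs'.toFinset ⟨cs', h', rfl, he'⟩]

lemma pair_split {α : Type*} {a b : α} {l : List α} (hne : a ≠ b) (ha : a ∈ l) (hb : b ∈ l) :
    ∃ l1 c l2, l = l1 ++ c :: l2 ∧ ((c = a ∧ b ∈ l2) ∨ (c = b ∧ a ∈ l2)) := by
  obtain ⟨p, q, rfl⟩ := List.append_of_mem ha
  rcases List.mem_append.1 hb with hbp | hbq
  · obtain ⟨p1, p2, rfl⟩ := List.append_of_mem hbp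
    refine ⟨p1, b, p2 ++ a :: q, by simp, Or.inr ⟨rfl, by simp⟩⟩
  · rcases List.mem_cons.1 hbq with h' | h'
    · exact absurd h'.symm hne
    · exact ⟨p, a, q, rfl, Or.inl ⟨rfl, h'⟩⟩

/-- uniqueness of the entering edge -/
lemma ent_eq (hconn : ∀ a b : Fin n, ∃ es, IsWalk src tgt a b es)
    (hcactus : ∀ e : Fin r, ∃! Cyc : Finset (Fin r),
      ∃ es, IsCycle src tgt es ∧ es.toFinset = Cyc ∧ e ∈ es)
    {w : Fin n} (hw : w ≠ ρ) {e1 e2 : Fin r}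
    (h1 : tgt e1 = w ∧ ¬ Dom src tgt ρ w (src e1))
    (h2 : tgt e2 = w ∧ ¬ Dom src tgt ρ w (src e2)) : e1 = e2 := by
  classical
  -- a walk from w to ρ that does not revisit w
  obtain ⟨W, hW⟩ := hconn w ρ
  obtain ⟨q1, Q, _, _, hQ, hQn⟩ := split_last_visit hW (by simp : w ∈ w :: W.map tgt)
  have hQne : Q ≠ [] := by
    rintro rfl
    exact hw (isWalk_nil.1 hQ)
  obtain ⟨q0, qt, rfl⟩ := List.exists_cons_of_ne_nil hQne
  have key : ∀ e : Fin r, tgt e = w → ¬ Dom src tgt ρ w (src e) →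
      ∃ cs, IsCycle src tgt cs ∧ e ∈ cs ∧ q0 ∈ cs := by
    intro e het hed
    obtain ⟨P, hP, hPn⟩ := not_dom_iff.1 hed
    have hZ : IsWalk src tgt w w ((q0 :: qt) ++ (P ++ [e])) :=
      isWalk_append hQ (isWalk_append hP ⟨rfl, het⟩)
    have heZ : e ∈ (q0 :: qt) ++ (P ++ [e]) := by simp
    obtain ⟨cs, hcyc, hecs, hsub⟩ := cycle_of_closed hZ heZ
    obtain ⟨hne, ⟨a, hcl⟩, hnd⟩ := hcyc
    obtain ⟨f, hf, hfsrc⟩ := exists_src_eq_tgt hcl hecs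
    rw [het] at hfsrc
    have hfZ := hsub f hf
    have hfq0 : f = q0 := by
      rcases List.mem_append.1 hfZ with hfQ | hfPe
      · rcases List.mem_cons.1 hfQ with h' | h'
        · exact h'
        · exfalso
          have := src_mem_visits hQ.2 h'
          rw [hfsrc] at this
          have h'' : w ∈ (q0 :: qt).map tgt := by simpa using this
          exact hQn h''
      · exfalso
        rcases List.mem_append.1 hfPe with h' | h'
        · have := src_mem_visits hP h'
          rw [hfsrc] at this
          exact hPn this
        · have : f = e := by simpa using h'
          subst this
          rw [hfsrc] at hed
          exact hed dom_self
    exact ⟨cs, ⟨hne, ⟨a, hcl⟩, hnd⟩, hecs, hfq0 ▸ hf⟩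
  obtain ⟨cs1, hc1, he1c, hq1c⟩ := key e1 h1.1 h1.2
  obtain ⟨cs2, hc2, he2c, hq2c⟩ := key e2 h2.1 h2.2
  have hfeq := cyc_finset_eq hcactus hc1 hc2 hq1c hq2c
  have he2c1 : e2 ∈ cs1 := by
    have : e2 ∈ cs1.toFinset := hfeq ▸ (List.mem_toFinset.2 he2c)
    exact List.mem_toFinset.1 this
  exact cyc_tgt_inj hc1 he1c he2c1 (h1.1.trans h2.1.symm)

/-- existence of the entering edge -/
lemma ent_exists (hconn : ∀ a b : Fin n, ∃ es, IsWalk src tgt a b es)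
    {w : Fin n} (hw : w ≠ ρ) :
    ∃ e : Fin r, tgt e = w ∧ ¬ Dom src tgt ρ w (src e) := by
  obtain ⟨W, hW⟩ := hconn ρ w
  have hwv : w ∈ ρ :: W.map tgt := end_mem_visits hW
  rcases split_first_visit hW hwv with h' | ⟨es1, g, es2, _, h1, h2, _, hnv⟩
  · exact absurd h'.symm hw
  · exact ⟨g, h2, notDom_of_walk h1 hnv⟩

/-- a walk from a dominated vertex to a non-dominated one crosses the cut -/
lemma cross {w b : Fin n} {es : List (Fin r)} :
    ∀ (a : Fin n), IsWalk src tgt a b es → Dom src tgt ρ w a → ¬ Dom src tgt ρ w b →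
      ∃ e ∈ es, Dom src tgt ρ w (src e) ∧ ¬ Dom src tgt ρ w (tgt e) := by
  induction es with
  | nil =>
    intro a h ha hb
    exact absurd ((isWalk_nil.1 h) ▸ ha) hb
  | cons e t ih =>
    intro a h ha hb
    by_cases htgt : Dom src tgt ρ w (tgt e)
    · obtain ⟨f, hf, hp⟩ := ih (tgt e) h.2 htgt hb
      exact ⟨f, by simp [hf], hp⟩
    · exact ⟨e, by simp, h.1 ▸ ha, htgt⟩

/-- every leaving edge lies on a cycle through `w`, whose in-edge at `w` is entering -/
lemma leave_cycle (hconn : ∀ a b : Fin n, ∃ es, IsWalk src tgt a b es)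
    {w : Fin n} (hw : w ≠ ρ) {e : Fin r}
    (he : Dom src tgt ρ w (src e) ∧ ¬ Dom src tgt ρ w (tgt e)) :
    ∃ cs, IsCycle src tgt cs ∧ e ∈ cs ∧
      ∃ g ∈ cs, tgt g = w ∧ ¬ Dom src tgt ρ w (src g) := by
  classical
  have hb : tgt e ≠ w := fun h => he.2 (h ▸ dom_self)
  -- walk from w to src e that does not revisit w
  obtain ⟨Wa, hWa⟩ := hconn ρ (src e)
  obtain ⟨a1, A, _, _, hA, hAn⟩ := split_last_visit hWa (he.1 Wa hWa)
  -- walk from tgt e to w hitting w only at the end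
  obtain ⟨Wb, hWb⟩ := hconn (tgt e) w
  rcases split_first_visit hWb (end_mem_visits hWb) with h' | ⟨r1, g0, r2, _, hr1, hg0, _, hrn⟩
  · exact absurd h' hb
  -- the closed walk through e
  have hZ : IsWalk src tgt w w (A ++ e :: (r1 ++ [g0])) :=
    isWalk_append hA ⟨rfl, isWalk_append hr1 ⟨rfl, hg0⟩⟩
  have heZ : e ∈ A ++ e :: (r1 ++ [g0]) := by simp
  obtain ⟨cs, hcyc, hecs, _⟩ := cycle_of_closed hZ heZ
  obtain ⟨hne, ⟨c, hcl⟩, hnd⟩ := hcyc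
  obtain ⟨m1, m2, rfl⟩ := List.append_of_mem hecs
  have hrot := rotate_closed hcl rfl
  have hVnodup : (m2 ++ m1).Nodup := by
    have h1 := cyc_nodup ⟨hne, ⟨c, hcl⟩, hnd⟩
    rw [List.nodup_append] at h1 ⊢
    simp only [List.nodup_cons] at h1
    obtain ⟨hm1, ⟨hem2, hm2⟩, hdisj⟩ := h1
    refine ⟨hm2, hm1, fun x hx hx' => ?_⟩
    exact fun hy hxy => hdisj hx' hy x (by simp [hx]) hxy.symm
  have heV : e ∉ m2 ++ m1 := by
    have h1 := cyc_nodup ⟨hne, ⟨c, hcl⟩, hnd⟩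
    rw [List.nodup_append] at h1
    simp only [List.nodup_cons] at h1
    intro hx
    rcases List.mem_append.1 hx with h' | h'
    · exact h1.2.1.1 h'
    · exact h1.2.2 e h' e (by simp) rfl
  have hVmem : ∀ x ∈ m2 ++ m1, x ∈ m1 ++ e :: m2 := by
    intro x hx
    rcases List.mem_append.1 hx with h' | h' <;> simp [h']
  -- w is a vertex of the cycle
  have hgex : ∃ g ∈ m1 ++ e :: m2, tgt g = w := by
    by_contra hcon
    push_neg at hcon
    have hwV : w ∉ (m2 ++ m1).map tgt := by
      intro hx
      obtain ⟨x, hx1, hx2⟩ := List.mem_map.1 hx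
      exact hcon x (hVmem x hx1) hx2
    exact (notDom_extend he.2 hrot hwV) he.1
  obtain ⟨g, hgcs, hgt⟩ := hgex
  have hge : g ≠ e := fun h => hb (h ▸ hgt)
  have hgV : g ∈ m2 ++ m1 := by
    rcases List.mem_append.1 hgcs with h' | h'
    · simp [h']
    · rcases List.mem_cons.1 h' with h'' | h''
      · exact absurd h'' hge
      · simp [h'']
  -- the prefix of the rotated walk up to g avoids w
  obtain ⟨v1, v2, hsp⟩ := List.append_of_mem hgV
  rw [hsp] at hrot
  obtain ⟨c1, hv1, hv2⟩ := isWalk_append_iff.1 hrot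
  have hv1' : IsWalk src tgt (tgt e) (src g) v1 := by rwa [← hv2.1] at hv1
  have hwv1 : w ∉ v1.map tgt := by
    intro hx
    obtain ⟨x, hx1, hx2⟩ := List.mem_map.1 hx
    have hxV : x ∈ m2 ++ m1 := by rw [hsp]; simp [hx1]
    have : x = g := cyc_tgt_inj ⟨hne, ⟨c, hcl⟩, hnd⟩ (hVmem x hxV) hgcs (hx2.trans hgt.symm)
    subst this
    rw [hsp] at hVnodup
    rw [List.nodup_append] at hVnodup
    exact hVnodup.2.2 x hx1 x (by simp) rfl
  exact ⟨m1 ++ e :: m2, ⟨hne, ⟨c, hcl⟩, hnd⟩, hecs, g, hgcs, hgt,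
    notDom_extend he.2 hv1' hwv1⟩

/-- at most one leaving edge on a cycle through w -/
lemma leave_eq_on_cycle {w : Fin n} {cs : List (Fin r)} (hcyc : IsCycle src tgt cs)
    {g : Fin r} (hg : g ∈ cs) (hgt : tgt g = w)
    {e1 e2 : Fin r} (he1 : e1 ∈ cs) (he2 : e2 ∈ cs)
    (h1 : Dom src tgt ρ w (src e1) ∧ ¬ Dom src tgt ρ w (tgt e1))
    (h2 : Dom src tgt ρ w (src e2) ∧ ¬ Dom src tgt ρ w (tgt e2)) : e1 = e2 := by
  classical
  by_contra hne12
  obtain ⟨hne, ⟨c, hcl⟩, hnd⟩ := hcyc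
  obtain ⟨m1, m2, rfl⟩ := List.append_of_mem hg
  have hrot := rotate_closed hcl rfl
  rw [hgt] at hrot
  -- V := m2 ++ m1 is a walk from w to src g, not containing g
  have hVnodup : (m2 ++ m1).Nodup := by
    have hnodup := cyc_nodup ⟨hne, ⟨c, hcl⟩, hnd⟩
    rw [List.nodup_append] at hnodup ⊢
    simp only [List.nodup_cons] at hnodup
    exact ⟨hnodup.2.1.2, hnodup.1, fun x hx y hy hxy => hnodup.2.2 y hy x (by simp [hx]) hxy.symm⟩
  have hgV : g ∉ m2 ++ m1 := by
    have hnodup := cyc_nodup ⟨hne, ⟨c, hcl⟩, hnd⟩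
    rw [List.nodup_append] at hnodup
    simp only [List.nodup_cons] at hnodup
    intro hx
    rcases List.mem_append.1 hx with h' | h'
    · exact hnodup.2.1.1 h'
    · exact hnodup.2.2 g h' g (by simp) rfl
  have hVmem : ∀ x ∈ m2 ++ m1, x ∈ m1 ++ g :: m2 := by
    intro x hx
    rcases List.mem_append.1 hx with h' | h' <;> simp [h']
  have hne1g : e1 ≠ g := fun h => h1.2 (by rw [h, hgt]; exact dom_self)
  have hne2g : e2 ≠ g := fun h => h2.2 (by rw [h, hgt]; exact dom_self)
  have he1V : e1 ∈ m2 ++ m1 := by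
    rcases List.mem_append.1 he1 with h' | h'
    · simp [h']
    · rcases List.mem_cons.1 h' with h'' | h''
      · exact absurd h'' hne1g
      · simp [h'']
  have he2V : e2 ∈ m2 ++ m1 := by
    rcases List.mem_append.1 he2 with h' | h'
    · simp [h']
    · rcases List.mem_cons.1 h' with h'' | h''
      · exact absurd h'' hne2g
      · simp [h'']
  obtain ⟨u1, x, u2, hsp, hxy⟩ := pair_split hne12 he1V he2V
  -- x is leaving, and the other edge y ∈ u2 is also leaving
  have hmain : ∀ x y : Fin r, (m2 ++ m1) = u1 ++ x :: u2 → y ∈ u2 →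
      ¬ Dom src tgt ρ w (tgt x) → Dom src tgt ρ w (src y) → False := by
    intro x y hsp' hyu2 hx hy
    rw [hsp'] at hrot
    obtain ⟨c1, _, hv2⟩ := isWalk_append_iff.1 hrot
    obtain ⟨z1, z2, rfl⟩ := List.append_of_mem hyu2
    obtain ⟨c2, hz1, hz2⟩ := isWalk_append_iff.1 hv2.2
    have hz1' : IsWalk src tgt (tgt x) (src y) z1 := by rwa [← hz2.1] at hz1
    have hwz1 : w ∉ z1.map tgt := by
      intro hmem
      obtain ⟨z, hz, hzt⟩ := List.mem_map.1 hmem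
      have hzV : z ∈ m2 ++ m1 := by rw [hsp']; simp [hz]
      have : z = g := cyc_tgt_inj ⟨hne, ⟨c, hcl⟩, hnd⟩ (hVmem z hzV) hg (hzt.trans hgt.symm)
      subst this
      exact hgV hzV
    exact (notDom_extend hx hz1' hwz1) hy
  rcases hxy with ⟨hxe, hy⟩ | ⟨hxe, hy⟩
  · exact hmain x e2 hsp hy (hxe ▸ h1.2) h2.1
  · exact hmain x e1 hsp hy (hxe ▸ h2.2) h1.1

/-- the unique entering edge -/
lemma ent_unique (hconn : ∀ a b : Fin n, ∃ es, IsWalk src tgt a b es)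
    (hcactus : ∀ e : Fin r, ∃! Cyc : Finset (Fin r),
      ∃ es, IsCycle src tgt es ∧ es.toFinset = Cyc ∧ e ∈ es)
    {w : Fin n} (hw : w ≠ ρ) :
    ∃! e : Fin r, tgt e = w ∧ ¬ Dom src tgt ρ w (src e) := by
  obtain ⟨e, he⟩ := ent_exists hconn hw
  exact ⟨e, he, fun e' he' => ent_eq hconn hcactus hw he' he⟩

/-- the unique leaving edge -/
lemma leave_unique (hconn : ∀ a b : Fin n, ∃ es, IsWalk src tgt a b es)
    (hcactus : ∀ e : Fin r, ∃! Cyc : Finset (Fin r),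
      ∃ es, IsCycle src tgt es ∧ es.toFinset = Cyc ∧ e ∈ es)
    {w : Fin n} (hw : w ≠ ρ) :
    ∃! e : Fin r, Dom src tgt ρ w (src e) ∧ ¬ Dom src tgt ρ w (tgt e) := by
  obtain ⟨W, hW⟩ := hconn w ρ
  obtain ⟨e, heW, hep⟩ := cross w hW dom_self (not_dom_rho hw)
  refine ⟨e, hep, fun e' hep' => ?_⟩
  obtain ⟨cs1, hc1, hec1, g1, hg1, hgt1, hgd1⟩ := leave_cycle hconn hw hep'
  obtain ⟨cs2, hc2, hec2, g2, hg2, hgt2, hgd2⟩ := leave_cycle hconn hw hep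
  have hg12 : g1 = g2 := ent_eq hconn hcactus hw ⟨hgt1, hgd1⟩ ⟨hgt2, hgd2⟩
  have hfeq := cyc_finset_eq hcactus hc1 hc2 hg1 (hg12 ▸ hg2)
  have hec2' : e ∈ cs1 := by
    have : e ∈ cs1.toFinset := hfeq ▸ (List.mem_toFinset.2 hec2)
    exact List.mem_toFinset.1 this
  exact leave_eq_on_cycle hc1 hg1 hgt1 hec1 hec2' hep' hep

end Unique

end Cact

open Cact

/-- For a directed cactus graph (strongly connected, each edge in exactly one
directed cycle) there is an invertible rational matrix K such that each of the
first n−1 rows of K·I_G has exactly two nonzero entries, of opposite signs. -/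
theorem stmt_5 {n r : ℕ} (src tgt : Fin r → Fin n)
    (hconn : ∀ a b : Fin n, ∃ es, IsWalk src tgt a b es)
    (hcactus : ∀ e : Fin r, ∃! Cyc : Finset (Fin r),
      ∃ es, IsCycle src tgt es ∧ es.toFinset = Cyc ∧ e ∈ es) :
    ∃ K : Matrix (Fin n) (Fin n) ℚ, IsUnit K.det ∧
      ∀ i : Fin n, (i : ℕ) < n - 1 →
        ∃ j1 j2 : Fin r, j1 ≠ j2 ∧
          0 < (K * incidence src tgt) i j1 ∧
          (K * incidence src tgt) i j2 < 0 ∧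
          ∀ j, j ≠ j1 → j ≠ j2 → (K * incidence src tgt) i j = 0 := by
  classical
  rcases Nat.eq_zero_or_pos n with hn | hn
  · subst hn
    refine ⟨1, by simp, fun i _ => i.elim0⟩
  set ρ : Fin n := ⟨n - 1, by omega⟩ with hρdef
  have hρval : (ρ : ℕ) = n - 1 := rfl
  have hne_rho : ∀ i : Fin n, (i : ℕ) < n - 1 → i ≠ ρ := by
    intro i hi h
    rw [h, hρval] at hi
    omega
  have hlt_rho : ∀ i : Fin n, i ≠ ρ → (i : ℕ) < n - 1 := by
    intro i hi
    have := i.isLt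
    rcases Nat.lt_or_ge (i : ℕ) (n - 1) with h' | h'
    · exact h'
    · exfalso; exact hi (Fin.ext (by omega))
  set K : Matrix (Fin n) (Fin n) ℚ := Matrix.of fun i u =>
    if (i : ℕ) < n - 1 then (if Dom src tgt ρ i u then 1 else 0)
    else (if u = ρ then 1 else 0) with hKdef
  have hrow : ∀ (i : Fin n) (j : Fin r),
      (K * incidence src tgt) i j = K i (tgt j) - K i (src j) := by
    intro i j
    simp only [Matrix.mul_apply, incidence, Matrix.of_apply, mul_sub, mul_ite, mul_one, mul_zero]
    rw [Finset.sum_sub_distrib, Finset.sum_ite_eq, Finset.sum_ite_eq]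
    simp
  have hKlt : ∀ (i : Fin n), (i : ℕ) < n - 1 → ∀ u, K i u = if Dom src tgt ρ i u then 1 else 0 := by
    intro i hi u
    simp [hKdef, hi]
  -- invertibility
  have hker : ∀ c : Fin n → ℚ, Matrix.vecMul c K = 0 → c = 0 := by
    intro c hc
    have hcρ : c ρ = 0 := by
      have h0 := congrFun hc ρ
      rw [Matrix.vecMul, dotProduct] at h0
      rw [Finset.sum_eq_single ρ] at h0
      · have hK1 : K ρ ρ = 1 := by
          simp only [hKdef, Matrix.of_apply, hρval]
          rw [if_neg (by omega)]
          simp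
        rw [hK1, mul_one] at h0
        simpa using h0
      · intro i _ hine
        have hi := hlt_rho i hine
        rw [hKlt i hi ρ, if_neg (not_dom_rho hine), mul_zero]
      · intro h; exact absurd (Finset.mem_univ ρ) h
    by_contra hcne
    have hex : ∃ w, c w ≠ 0 := by
      by_contra h
      push_neg at h
      exact hcne (funext fun w => h w)
    set supp : Finset (Fin n) := Finset.univ.filter (fun v => c v ≠ 0) with hsupp
    have hsne : supp.Nonempty := by
      obtain ⟨w, hw⟩ := hex
      exact ⟨w, by simp [hsupp, hw]⟩
    set m : Fin n → ℕ := fun u => (Finset.univ.filter (fun v => Dom src tgt ρ v u)).card with hm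
    obtain ⟨u, hu_supp, humin⟩ := Finset.exists_min_image supp m hsne
    have hcu : c u ≠ 0 := by
      simp only [hsupp, Finset.mem_filter] at hu_supp
      exact hu_supp.2
    have huρ : u ≠ ρ := fun h => hcu (h ▸ hcρ)
    have h0 := congrFun hc u
    rw [Matrix.vecMul, dotProduct] at h0
    rw [Finset.sum_eq_single u] at h0
    · have : K u u = 1 := by
        rw [hKlt u (hlt_rho u huρ) u, if_pos dom_self]
      rw [this, mul_one] at h0
      exact hcu (by simpa using h0)
    · intro i _ hine
      by_cases hci : c i = 0
      · rw [hci, zero_mul]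
      by_cases hiρ : i = ρ
      · rw [hiρ, hcρ, zero_mul]
      rw [hKlt i (hlt_rho i hiρ) u]
      by_cases hdom : Dom src tgt ρ i u
      · exfalso
        have hsub : Finset.univ.filter (fun v => Dom src tgt ρ v i) ⊂
            Finset.univ.filter (fun v => Dom src tgt ρ v u) := by
          constructor
          · intro v hv
            simp only [Finset.mem_filter, Finset.mem_univ, true_and] at hv ⊢
            exact dom_trans hv hdom
          · intro hsub'
            have hu_in : u ∈ Finset.univ.filter (fun v => Dom src tgt ρ v u) := by
              simp only [Finset.mem_filter, Finset.mem_univ, true_and]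
              exact dom_self
            have := hsub' hu_in
            simp only [Finset.mem_filter, Finset.mem_univ, true_and] at this
            exact hine (dom_antisymm hconn this hdom).symm
        have hlt := Finset.card_lt_card hsub
        have hgei : i ∈ supp := by simp [hsupp, hci]
        have := humin i hgei
        simp only [hm] at this hlt
        omega
      · rw [if_neg hdom, mul_zero]
    · intro h; exact absurd (Finset.mem_univ u) h
  have hKunit : IsUnit K := by
    rw [← Matrix.vecMul_injective_iff_isUnit]
    intro x y hxy
    have hxy' : Matrix.vecMul x K = Matrix.vecMul y K := hxy
    have h1 : Matrix.vecMul (x - y) K = 0 := by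
      rw [Matrix.sub_vecMul, hxy', sub_self]
    have h2 := hker _ h1
    funext t
    have h3 := congrFun h2 t
    simp only [Pi.sub_apply, Pi.zero_apply, sub_eq_zero] at h3
    exact h3
  refine ⟨K, (Matrix.isUnit_iff_isUnit_det K).1 hKunit, ?_⟩
  intro i hi
  have hiρ : i ≠ ρ := hne_rho i hi
  obtain ⟨je, hje, hjeu⟩ := ent_unique hconn hcactus hiρ
  obtain ⟨jl, hjl, hjlu⟩ := leave_unique hconn hcactus hiρ
  have hval : ∀ j, (K * incidence src tgt) i j =
      (if Dom src tgt ρ i (tgt j) then 1 else 0) - (if Dom src tgt ρ i (src j) then 1 else 0) := by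
    intro j
    rw [hrow, hKlt i hi, hKlt i hi]
  refine ⟨je, jl, ?_, ?_, ?_, ?_⟩
  · intro h
    rw [h] at hje
    exact hje.2 hjl.1
  · rw [hval, if_pos (hje.1 ▸ dom_self), if_neg hje.2]
    norm_num
  · rw [hval, if_pos hjl.1, if_neg hjl.2]
    norm_num
  · intro j hj1 hj2
    rw [hval]
    by_cases hdt : Dom src tgt ρ i (tgt j) <;> by_cases hds : Dom src tgt ρ i (src j)
    · rw [if_pos hdt, if_pos hds, sub_self]
    · -- entering edge
      exfalso
      have htgt : tgt j = i := by
        by_contra hne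
        have hwalk : IsWalk src tgt (src j) (tgt j) [j] := ⟨rfl, rfl⟩
        have : ¬ Dom src tgt ρ i (tgt j) :=
          notDom_extend hds hwalk (by simpa using fun h => hne h.symm)
        exact this hdt
      exact hj1 (hjeu j ⟨htgt, hds⟩)
    · -- leaving edge
      exfalso
      exact hj2 (hjlu j ⟨hds, hdt⟩)
    · rw [if_neg hdt, if_neg hds, sub_self]
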